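/- arXiv:2006.06970 — 2 statements merged into one kernel-verified Lean document; each statement's English description precedes it below -/
import Mathlib

section
/- For all m ≥ 1 and n ≥ 1, A^{2m}(B(n)) − 1 = A(B^m(A(n))), where A(n) = ⌊nφ⌋, B(n) = ⌊nφ²⌋, and A^k, B^k denote k-fold iterates. -/
noncomputable def phi : ℝ := (1 + Real.sqrt 5) / 2

/-- Lower Wythoff sequence. -/
noncomputable def A (n : ℕ) : ℕ := (⌊(n : ℝ) * phi⌋).toNat

/-- Upper Wythoff sequence. -/
noncomputable def B (n : ℕ) : ℕ := (⌊(n : ℝ) * phi ^ 2⌋).toNat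

/-- `d` is the digit sequence of the Zeckendorf expansion of `N`:
digits are 0/1, no two consecutive 1's, finitely many nonzero digits,
and `N = Σ dᵢ · F_{i+2}`. -/
def IsZeck (N : ℕ) (d : ℕ → ℕ) : Prop :=
  (∀ i, d i ≤ 1) ∧ (∀ i, ¬(d i = 1 ∧ d (i + 1) = 1)) ∧
  (Function.support d).Finite ∧ N = ∑ᶠ i, d i * Nat.fib (i + 2)

lemma phi_eq_gold : phi = Real.goldenRatio := rfl

lemma phi_pos : 0 < phi := Real.goldenRatio_pos
lemma one_lt_phi : 1 < phi := Real.one_lt_goldenRatio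
lemma phi_lt_two : phi < 2 := Real.goldenRatio_lt_two
lemma phi_sq : phi ^ 2 = phi + 1 := Real.goldenRatio_sq
lemma irr_phi : Irrational phi := Real.goldenRatio_irrational

lemma A_def (k : ℕ) : (A k : ℤ) = ⌊(k : ℝ) * phi⌋ := by
  unfold A
  exact Int.toNat_of_nonneg (Int.floor_nonneg.mpr
    (mul_nonneg (Nat.cast_nonneg k) phi_pos.le))

lemma B_def (k : ℕ) : (B k : ℤ) = ⌊(k : ℝ) * phi ^ 2⌋ := by
  unfold B
  exact Int.toNat_of_nonneg (Int.floor_nonneg.mpr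
    (mul_nonneg (Nat.cast_nonneg k) (pow_nonneg phi_pos.le 2)))

lemma A_le (k : ℕ) : (A k : ℝ) ≤ (k : ℝ) * phi := by
  have := Int.floor_le ((k : ℝ) * phi)
  rw [← A_def] at this; exact_mod_cast this

lemma lt_A_add_one (k : ℕ) : (k : ℝ) * phi < (A k : ℝ) + 1 := by
  have := Int.lt_floor_add_one ((k : ℝ) * phi)
  rw [← A_def] at this; exact_mod_cast this

lemma A_lt (k : ℕ) (hk : 1 ≤ k) : (A k : ℝ) < (k : ℝ) * phi := by
  have hirr : Irrational ((k : ℝ) * phi) := irr_phi.natCast_mul (by omega)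
  have hne : (k : ℝ) * phi ≠ (A k : ℝ) := by
    have := hirr.ne_int (A k : ℤ)
    simpa using this
  exact lt_of_le_of_ne (A_le k) (Ne.symm hne)

lemma B_eq (k : ℕ) : B k = A k + k := by
  have : (B k : ℤ) = (A k : ℤ) + k := by
    rw [A_def, B_def, phi_sq]
    have : (k : ℝ) * (phi + 1) = (k : ℝ) * phi + (k : ℤ) := by push_cast; ring
    rw [this, Int.floor_add_intCast]
  exact_mod_cast this

lemma A_one_le (k : ℕ) (hk : 1 ≤ k) : 1 ≤ A k := by
  have h1 : (1 : ℤ) ≤ (A k : ℤ) := by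
    rw [A_def]
    have : (1 : ℝ) ≤ (k : ℝ) * phi := by
      have : (1 : ℝ) ≤ (k : ℝ) := by exact_mod_cast hk
      nlinarith [one_lt_phi]
    exact_mod_cast Int.le_floor.mpr (by exact_mod_cast this)
  exact_mod_cast h1

/-- A(A k) + 1 = A k + k for k ≥ 1. -/
lemma AA (k : ℕ) (hk : 1 ≤ k) : A (A k) + 1 = A k + k := by
  have hf1 : (A k : ℝ) < (k : ℝ) * phi := A_lt k hk
  have hf2 : (k : ℝ) * phi < (A k : ℝ) + 1 := lt_A_add_one k
  have key : (A (A k) : ℤ) = (A k : ℤ) + k - 1 := by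
    rw [A_def]
    apply Int.floor_eq_iff.mpr
    constructor
    · push_cast
      nlinarith [phi_sq, one_lt_phi, phi_lt_two]
    · push_cast
      nlinarith [phi_sq, one_lt_phi, phi_lt_two]
  omega

/-- A(B k) = A k + B k for k ≥ 1. -/
lemma AB (k : ℕ) (hk : 1 ≤ k) : A (B k) = A k + B k := by
  have hf1 : (A k : ℝ) < (k : ℝ) * phi := A_lt k hk
  have hf2 : (k : ℝ) * phi < (A k : ℝ) + 1 := lt_A_add_one k
  have hb : (B k : ℝ) = (A k : ℝ) + k := by exact_mod_cast B_eq k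
  have key : (A (B k) : ℤ) = (A k : ℤ) + B k := by
    rw [A_def]
    apply Int.floor_eq_iff.mpr
    constructor
    · push_cast [hb]
      nlinarith [phi_sq, one_lt_phi, phi_lt_two]
    · push_cast [hb]
      nlinarith [phi_sq, one_lt_phi, phi_lt_two]
  exact_mod_cast key

/-- A(A k + 1) = A k + k + 1 for k ≥ 1. -/
lemma A_Asucc (k : ℕ) (hk : 1 ≤ k) : A (A k + 1) = A k + k + 1 := by
  have hf1 : (A k : ℝ) < (k : ℝ) * phi := A_lt k hk
  have hf2 : (k : ℝ) * phi < (A k : ℝ) + 1 := lt_A_add_one k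
  have key : (A (A k + 1) : ℤ) = (A k : ℤ) + k + 1 := by
    rw [A_def]
    apply Int.floor_eq_iff.mpr
    constructor
    · push_cast
      nlinarith [phi_sq, one_lt_phi, phi_lt_two]
    · push_cast
      nlinarith [phi_sq, one_lt_phi, phi_lt_two]
  exact_mod_cast key

/-- A(B k + 1) = A k + B k + 1 for k ≥ 1. -/
lemma A_Bsucc (k : ℕ) (hk : 1 ≤ k) : A (B k + 1) = A k + B k + 1 := by
  have hf1 : (A k : ℝ) < (k : ℝ) * phi := A_lt k hk
  have hf2 : (k : ℝ) * phi < (A k : ℝ) + 1 := lt_A_add_one k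
  have hb : (B k : ℝ) = (A k : ℝ) + k := by exact_mod_cast B_eq k
  have key : (A (B k + 1) : ℤ) = (A k : ℤ) + B k + 1 := by
    rw [A_def]
    apply Int.floor_eq_iff.mpr
    constructor
    · push_cast [hb]
      nlinarith [phi_sq, one_lt_phi, phi_lt_two]
    · push_cast [hb]
      nlinarith [phi_sq, one_lt_phi, phi_lt_two]
  exact_mod_cast key

lemma B_iter_ge (m k : ℕ) (hk : 1 ≤ k) : 1 ≤ B^[m] k := by
  induction m with
  | zero => simpa
  | succ m ih =>
    rw [Function.iterate_succ_apply']
    have := B_eq (B^[m] k)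
    omega

/-- Main induction: A^[2m](B n) = A(B^[m](A n)) + 1. -/
lemma main_aux (n : ℕ) (hn : 1 ≤ n) :
    ∀ m, 1 ≤ m → A^[2 * m] (B n) = A (B^[m] (A n)) + 1 := by
  intro m hm
  induction m with
  | zero => omega
  | succ m ih =>
    rcases Nat.eq_or_lt_of_le hm with h1 | h1
    · -- base case m + 1 = 1
      have hm0 : m = 0 := by omega
      subst hm0
      show A (A (B n)) = A (B (A n)) + 1
      have ha1 : 1 ≤ A n := A_one_le n hn
      have hb1 : 1 ≤ B n := by have := B_eq n; omega
      have e1 : A (A (B n)) + 1 = A (B n) + B n := AA (B n) hb1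
      have e2 : A (B n) = A n + B n := AB n hn
      have e3 : A (B (A n)) = A (A n) + B (A n) := AB (A n) ha1
      have e4 : B (A n) = A (A n) + A n := B_eq (A n)
      have e5 : A (A n) + 1 = A n + n := AA n hn
      have e6 : B n = A n + n := B_eq n
      omega
    · -- inductive step, m ≥ 1
      have hm' : 1 ≤ m := by omega
      have IH := ih hm'
      set w := B^[m] (A n) with hw
      have hw1 : 1 ≤ w := B_iter_ge m (A n) (A_one_le n hn)
      have hX : A^[2 * m] (B n) = A w + 1 := IH
      have hiter : A^[2 * (m + 1)] (B n) = A (A (A^[2 * m] (B n))) := by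
        have : 2 * (m + 1) = (2 * m) + 1 + 1 := by ring
        rw [this, Function.iterate_succ_apply', Function.iterate_succ_apply']
      have hBiter : B^[m + 1] (A n) = B w := Function.iterate_succ_apply' B m (A n)
      rw [hiter, hX, hBiter]
      have e1 : A (A w + 1) = A w + w + 1 := A_Asucc w hw1
      have e2 : B w = A w + w := B_eq w
      have e3 : A (B w + 1) = A w + B w + 1 := A_Bsucc w hw1
      have e4 : A (B w) = A w + B w := AB w hw1
      rw [e1]
      have : A w + w + 1 = B w + 1 := by omega
      rw [this, e3]
      omega

/-- A^{2m}(B(n)) − 1 = A(B^m(A(n))) for m, n ≥ 1. -/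
theorem iterate_A_B_sub_one' (m n : ℕ) (hm : 1 ≤ m) (hn : 1 ≤ n) :
    A^[2 * m] (B n) - 1 = A (B^[m] (A n)) := by
  have := main_aux n hn m hm
  omega
end

section
/- For every m ≥ 1, the set of natural numbers N whose Zeckendorf expansion ends in m zeros (i.e., d_0 = d_1 = ... = d_{m−1} = 0) is exactly {A^m(n) − 1 : n ≥ 1}, where A^m is the m-fold iterate of the lower Wythoff function A(n) = ⌊nφ⌋. -/
open goldenRatio Real

lemma phi_eq : phi = goldenRatio := rfl

lemma exists_bound {d : ℕ → ℕ} (h : (Function.support d).Finite) :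
    ∃ K, ∀ i, K ≤ i → d i = 0 := by
  obtain ⟨K, hK⟩ := h.bddAbove
  refine ⟨K + 1, fun i hi => ?_⟩
  by_contra hne
  exact absurd (hK (Function.mem_support.2 hne)) (by omega)

lemma finsum_range {d : ℕ → ℕ} {K : ℕ} (h : ∀ i, K ≤ i → d i = 0) (g : ℕ → ℕ) :
    ∑ᶠ i, d i * g i = ∑ i ∈ Finset.range K, d i * g i := by
  apply finsum_eq_sum_of_support_subset
  intro i hi
  simp only [Function.mem_support] at hi
  simp only [Finset.coe_range, Set.mem_Iio]
  by_contra h'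
  exact hi (by rw [h i (by omega)]; simp)

lemma zeck_bound : ∀ (L : ℕ) (e : ℕ → ℕ), (∀ i, e i ≤ 1) →
    goldenRatio - 2 ≤ ∑ i ∈ Finset.range L, (e i : ℝ) * goldenConj ^ (i + 2) ∧
    ∑ i ∈ Finset.range L, (e i : ℝ) * goldenConj ^ (i + 2) ≤ goldenRatio - 1 := by
  intro L
  induction L with
  | zero =>
    intro e he
    simp only [Finset.range_zero, Finset.sum_empty]
    constructor <;> nlinarith [goldenRatio_sq, one_lt_goldenRatio, goldenRatio_lt_two]
  | succ L ih =>
    intro e he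
    rw [Finset.sum_range_succ']
    obtain ⟨h1, h2⟩ := ih (fun i => e (i + 1)) (fun i => he (i + 1))
    have key : ∑ i ∈ Finset.range L, ((e (i + 1) : ℝ)) * goldenConj ^ (i + 1 + 2)
        = goldenConj * ∑ i ∈ Finset.range L, ((e (i + 1) : ℝ)) * goldenConj ^ (i + 2) := by
      rw [Finset.mul_sum]
      exact Finset.sum_congr rfl (fun i _ => by ring)
    rw [key]
    have he0 : (0 : ℝ) ≤ (e 0 : ℝ) := by positivity
    have he0' : (e 0 : ℝ) ≤ 1 := by exact_mod_cast he 0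
    have hψ : goldenConj = 1 - goldenRatio := one_sub_goldenConj.symm
    set T := ∑ i ∈ Finset.range L, ((e (i + 1) : ℝ)) * goldenConj ^ (i + 2) with hT
    rw [hψ]
    have hp1 : (goldenRatio - 1) * (T - (goldenRatio - 2)) ≥ 0 :=
      mul_nonneg (by linarith [one_lt_goldenRatio]) (by linarith)
    have hp2 : (goldenRatio - 1) * ((goldenRatio - 1) - T) ≥ 0 :=
      mul_nonneg (by linarith [one_lt_goldenRatio]) (by linarith)
    have hp3 : (1 - (e 0 : ℝ)) * (goldenRatio - 1) ^ 2 ≥ 0 :=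
      mul_nonneg (by linarith) (by positivity)
    have hp4 : (e 0 : ℝ) * (goldenRatio - 1) ^ 2 ≥ 0 := by positivity
    constructor
    · have key : (1 - goldenRatio) * T + (e 0 : ℝ) * (1 - goldenRatio) ^ (0 + 2) - (goldenRatio - 2)
          = (goldenRatio - 1) * ((goldenRatio - 1) - T) + (e 0 : ℝ) * (goldenRatio - 1) ^ 2
            + (1 + goldenRatio - goldenRatio ^ 2) := by ring
      linarith [key, hp2, hp4, goldenRatio_sq]
    · have key : (goldenRatio - 1) - ((1 - goldenRatio) * T + (e 0 : ℝ) * (1 - goldenRatio) ^ (0 + 2))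
          = (goldenRatio - 1) * (T - (goldenRatio - 2)) + (1 - (e 0 : ℝ)) * (goldenRatio - 1) ^ 2 := by
        ring
      linarith [key, hp1, hp3]

lemma A_succ_eq {n : ℕ} {d : ℕ → ℕ} (h : IsZeck n d) :
    A (n + 1) = (∑ᶠ i, d i * Nat.fib (i + 3)) + 1 := by
  obtain ⟨h1, h2, h3, h4⟩ := h
  obtain ⟨K, hK⟩ := exists_bound h3
  have hσ : (∑ᶠ i, d i * Nat.fib (i + 3)) = ∑ i ∈ Finset.range K, d i * Nat.fib (i + 3) :=
    finsum_range hK _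
  rw [hσ]
  set σ := ∑ i ∈ Finset.range K, d i * Nat.fib (i + 3) with hσdef
  have hnn : n = ∑ i ∈ Finset.range K, d i * Nat.fib (i + 2) := by
    rw [h4]; exact finsum_range hK _
  set T := ∑ i ∈ Finset.range K, (d i : ℝ) * goldenConj ^ (i + 2) with hTdef
  have hreal : (n : ℝ) * goldenRatio = (σ : ℝ) - T := by
    have hcast : (n : ℝ) = ∑ i ∈ Finset.range K, (d i : ℝ) * (Nat.fib (i + 2) : ℝ) := by
      rw [hnn]; push_cast; rfl
    rw [hcast, Finset.sum_mul, hσdef, hTdef]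
    push_cast
    rw [← Finset.sum_sub_distrib]
    apply Finset.sum_congr rfl
    intro i _
    have hfib := fib_succ_sub_goldenRatio_mul_fib (i + 2)
    have e3 : i + 2 + 1 = i + 3 := by omega
    rw [e3] at hfib
    have hfib' : goldenRatio * (Nat.fib (i + 2) : ℝ) = (Nat.fib (i + 3) : ℝ) - goldenConj ^ (i + 2) := by
      linarith
    rw [mul_assoc, mul_comm ((Nat.fib (i + 2) : ℝ)) goldenRatio, hfib', mul_sub]
  obtain ⟨hb1, hb2⟩ := zeck_bound K d h1
  rw [← hTdef] at hb1 hb2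
  have hirr : Irrational (((n + 1 : ℕ) : ℝ) * goldenRatio) :=
    goldenRatio_irrational.natCast_mul (m := n + 1) (by omega)
  have hne : ((n : ℝ) + 1) * goldenRatio ≠ (σ : ℝ) + 2 := by
    intro hEq
    have hirr' : Irrational (((n : ℝ) + 1) * goldenRatio) := by
      have : ((n + 1 : ℕ) : ℝ) = (n : ℝ) + 1 := by push_cast; ring
      rwa [this] at hirr
    exact hirr'.ne_int ((σ : ℤ) + 2) (by rw [hEq]; push_cast; ring)
  have key : (⌊((n + 1 : ℕ) : ℝ) * phi⌋ : ℤ) = (σ : ℤ) + 1 := by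
    rw [phi_eq]
    have hcast : ((n + 1 : ℕ) : ℝ) = (n : ℝ) + 1 := by push_cast; ring
    rw [hcast, Int.floor_eq_iff]
    constructor
    · push_cast
      nlinarith [hreal, hb2]
    · push_cast
      have hle : ((n : ℝ) + 1) * goldenRatio ≤ (σ : ℝ) + 2 := by nlinarith [hreal, hb1]
      have := lt_of_le_of_ne hle hne
      linarith
  show (⌊((n + 1 : ℕ) : ℝ) * phi⌋).toNat = σ + 1
  rw [key]
  omega

lemma fib_ge (k : ℕ) : k + 1 ≤ Nat.fib (k + 2) := by
  induction k with
  | zero => simp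
  | succ n ih =>
    have h1 : 0 < Nat.fib (n + 1) := Nat.fib_pos.2 (by omega)
    have h2 := Nat.fib_add_two (n := n + 1)
    rw [show n + 1 + 1 = n + 2 by omega] at h2 ⊢
    omega

lemma zeck_exists (N : ℕ) : ∃ d : ℕ → ℕ, IsZeck N d ∧ ∀ i, d i = 1 → Nat.fib (i + 2) ≤ N := by
  induction N using Nat.strong_induction_on with
  | _ N ih =>
  rcases Nat.eq_zero_or_pos N with rfl | hpos
  · exact ⟨fun _ => 0, ⟨fun i => by simp, fun i => by simp, by simp, by simp⟩,
      fun i h => by simp at h⟩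
  set k := Nat.findGreatest (fun k => Nat.fib (k + 2) ≤ N) N with hkdef
  have hP0 : Nat.fib (0 + 2) ≤ N := by
    have : Nat.fib (0 + 2) = 1 := by norm_num
    omega
  have hk1 : Nat.fib (k + 2) ≤ N :=
    Nat.findGreatest_spec (P := fun k => Nat.fib (k + 2) ≤ N) (Nat.zero_le N) hP0
  have hmax : N < Nat.fib (k + 3) := by
    by_contra hcon
    push_neg at hcon
    have hf := fib_ge (k + 1)
    rw [show k + 1 + 2 = k + 3 by omega] at hf
    have hkN : k + 1 ≤ N := by omega
    have := Nat.le_findGreatest (P := fun k => Nat.fib (k + 2) ≤ N) hkN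
      (by show Nat.fib (k + 1 + 2) ≤ N; rw [show k + 1 + 2 = k + 3 by omega]; exact hcon)
    omega
  set M := N - Nat.fib (k + 2) with hMdef
  have hMlt : M < N := by
    have : 0 < Nat.fib (k + 2) := Nat.fib_pos.2 (by omega)
    omega
  obtain ⟨d', ⟨hd1, hd2, hd3, hd4⟩, hbd⟩ := ih M hMlt
  have hMfib : M < Nat.fib (k + 1) := by
    have h3 := Nat.fib_add_two (n := k + 1)
    rw [show k + 1 + 2 = k + 3 by omega, show k + 1 + 1 = k + 2 by omega] at h3
    omega
  have hz' : ∀ i, k ≤ i + 1 → d' i = 0 := by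
    intro i hi
    by_contra hne
    have hdi : d' i = 1 := by have := hd1 i; omega
    have h2 : Nat.fib (i + 2) ≤ M := hbd i hdi
    have h4 : Nat.fib (i + 2) < Nat.fib (k + 1) := lt_of_le_of_lt h2 hMfib
    exact absurd h4 (not_lt.2 (Nat.fib_mono (by omega)))
  refine ⟨fun i => if i = k then 1 else d' i, ⟨?_, ?_, ?_, ?_⟩, ?_⟩
  · intro i
    dsimp only
    by_cases h : i = k
    · rw [if_pos h]
    · rw [if_neg h]; exact hd1 i
  · intro i hcon
    dsimp only at hcon
    obtain ⟨ha, hb⟩ := hcon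
    by_cases hik : i = k
    · rw [if_neg (by omega)] at hb
      have := hz' (i + 1) (by omega)
      omega
    · rw [if_neg hik] at ha
      by_cases hik' : i + 1 = k
      · have := hz' i (by omega)
        omega
      · rw [if_neg hik'] at hb
        exact hd2 i ⟨ha, hb⟩
  · apply Set.Finite.subset (hd3.insert k)
    intro i hi
    simp only [Function.mem_support] at hi
    by_cases h : i = k
    · exact Set.mem_insert_iff.2 (Or.inl h)
    · rw [if_neg h] at hi
      exact Set.mem_insert_iff.2 (Or.inr (Function.mem_support.2 hi))
  · obtain ⟨K0, hK0⟩ := exists_bound hd3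
    have hbound : ∀ i, max K0 (k + 1) ≤ i → (if i = k then 1 else d' i) = 0 := by
      intro i hi
      rw [if_neg (by omega)]
      exact hK0 i (by omega)
    rw [finsum_range hbound]
    have hd4' : M = ∑ i ∈ Finset.range (max K0 (k + 1)), d' i * Nat.fib (i + 2) := by
      rw [hd4]
      exact finsum_range (fun i hi => hK0 i (by omega)) _
    have hsplit : ∑ i ∈ Finset.range (max K0 (k + 1)), (if i = k then 1 else d' i) * Nat.fib (i + 2)
        = ∑ i ∈ Finset.range (max K0 (k + 1)),
            (d' i * Nat.fib (i + 2) + if i = k then Nat.fib (k + 2) else 0) := by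
      apply Finset.sum_congr rfl
      intro i _
      by_cases h : i = k
      · subst h
        rw [if_pos rfl, if_pos rfl, hz' k (by omega)]
        ring
      · rw [if_neg h, if_neg h]
        ring
    rw [hsplit, Finset.sum_add_distrib,
      Finset.sum_ite_eq' (Finset.range (max K0 (k + 1))) k (fun _ => Nat.fib (k + 2)),
      if_pos (Finset.mem_range.2 (by omega)), ← hd4']
    omega
  · intro i hi
    dsimp only at hi
    by_cases h : i = k
    · subst h; exact hk1
    · rw [if_neg h] at hi
      exact le_trans (hbd i hi) (by omega)

lemma A_ge (n : ℕ) : n ≤ A n := by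
  have h1 : (n : ℝ) ≤ (n : ℝ) * phi := by
    rw [phi_eq]
    nlinarith [one_lt_goldenRatio, Nat.cast_nonneg (α := ℝ) n]
  have h2 : (n : ℤ) ≤ ⌊(n : ℝ) * phi⌋ := Int.le_floor.2 (by exact_mod_cast h1)
  show n ≤ (⌊(n : ℝ) * phi⌋).toNat
  omega

lemma A_iter_ge (m n : ℕ) : n ≤ A^[m] n := by
  induction m with
  | zero => simp
  | succ m ih =>
    rw [Function.iterate_succ_apply']
    exact le_trans ih (A_ge _)

lemma shift_down {N : ℕ} {d : ℕ → ℕ} (h : IsZeck N d) (h0 : d 0 = 0) :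
    ∃ n : ℕ, IsZeck n (fun i => d (i + 1)) ∧ N + 1 = A (n + 1) := by
  obtain ⟨h1, h2, h3, h4⟩ := h
  obtain ⟨K, hK⟩ := exists_bound h3
  have hK' : ∀ i, K ≤ i → d (i + 1) = 0 := fun i hi => hK (i + 1) (by omega)
  refine ⟨∑ᶠ i, d (i + 1) * Nat.fib (i + 2), ⟨fun i => h1 (i + 1), fun i hcon => h2 (i + 1) hcon,
    ?_, rfl⟩, ?_⟩
  · apply Set.Finite.subset (Finset.range K).finite_toSet
    intro i hi
    simp only [Function.mem_support] at hi
    simp only [Finset.coe_range, Set.mem_Iio]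
    by_contra hc
    exact hi (hK' i (by omega))
  · have hA := A_succ_eq (n := ∑ᶠ i, d (i + 1) * Nat.fib (i + 2)) (d := fun i => d (i + 1))
      ⟨fun i => h1 (i + 1), fun i hcon => h2 (i + 1) hcon, by
        apply Set.Finite.subset (Finset.range K).finite_toSet
        intro i hi
        simp only [Function.mem_support] at hi
        simp only [Finset.coe_range, Set.mem_Iio]
        by_contra hc
        exact hi (hK' i (by omega)), rfl⟩
    rw [hA]
    congr 1
    rw [h4, finsum_range hK, finsum_range hK' (fun i => Nat.fib (i + 3))]
    rcases Nat.eq_zero_or_pos K with rfl | hKpos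
    · simp
    · obtain ⟨K', rfl⟩ : ∃ K', K = K' + 1 := ⟨K - 1, by omega⟩
      rw [Finset.sum_range_succ']
      have hlast : ∀ i ∈ Finset.range K', d (i + 1) * Nat.fib (i + 1 + 2) = d (i + 1) * Nat.fib (i + 3) := by
        intro i _
        congr 2
      rw [Finset.sum_congr rfl hlast, h0]
      have : ∑ i ∈ Finset.range (K' + 1), d (i + 1) * Nat.fib (i + 3)
          = ∑ i ∈ Finset.range K', d (i + 1) * Nat.fib (i + 3) := by
        rw [Finset.sum_range_succ, hK (K' + 1) (by omega)]
        simp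
      rw [this]
      simp

lemma shift_up {n : ℕ} {d : ℕ → ℕ} (h : IsZeck n d) :
    IsZeck (A (n + 1) - 1) (fun i => if i = 0 then 0 else d (i - 1)) := by
  obtain ⟨K, hK⟩ := exists_bound h.2.2.1
  have hA := A_succ_eq h
  obtain ⟨h1, h2, h3, h4⟩ := h
  have hbound : ∀ i, K + 1 ≤ i → (if i = 0 then 0 else d (i - 1)) = 0 := by
    intro i hi
    rw [if_neg (by omega)]
    exact hK (i - 1) (by omega)
  refine ⟨?_, ?_, ?_, ?_⟩
  · intro i
    dsimp only
    by_cases h : i = 0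
    · rw [if_pos h]; omega
    · rw [if_neg h]; exact h1 _
  · intro i hcon
    dsimp only at hcon
    obtain ⟨ha, hb⟩ := hcon
    by_cases h : i = 0
    · rw [if_pos h] at ha; omega
    · rw [if_neg h] at ha
      rw [if_neg (by omega)] at hb
      obtain ⟨j, rfl⟩ : ∃ j, i = j + 1 := ⟨i - 1, by omega⟩
      simp only [Nat.add_sub_cancel] at ha hb
      exact h2 j ⟨ha, hb⟩
  · apply Set.Finite.subset (Finset.range (K + 1)).finite_toSet
    intro i hi
    simp only [Function.mem_support] at hi
    simp only [Finset.coe_range, Set.mem_Iio]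
    by_contra hc
    exact hi (hbound i (by omega))
  · rw [hA]
    simp only [Nat.add_sub_cancel]
    rw [finsum_range hbound (fun i => Nat.fib (i + 2)), Finset.sum_range_succ']
    simp only [if_pos rfl, Nat.zero_add]
    have : ∀ i ∈ Finset.range K, (if i + 1 = 0 then 0 else d (i + 1 - 1)) * Nat.fib (i + 1 + 2)
        = d i * Nat.fib (i + 3) := by
      intro i _
      rw [if_neg (by omega)]
      congr 2
    rw [Finset.sum_congr rfl this, finsum_range hK (fun i => Nat.fib (i + 3))]
    simp

/-- For m ≥ 1, the numbers whose Zeckendorf expansion ends in m zeros are exactly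
the numbers A^m(n) − 1, n ≥ 1. -/
theorem zeck_ends_in_zeros (m : ℕ) (hm : 1 ≤ m) (N : ℕ) :
    (∃ d : ℕ → ℕ, IsZeck N d ∧ ∀ i, i < m → d i = 0) ↔
      ∃ n : ℕ, 1 ≤ n ∧ N = A^[m] n - 1 := by
  clear hm
  induction m generalizing N with
  | zero =>
    constructor
    · rintro ⟨d, hd, -⟩
      exact ⟨N + 1, by omega, by simp⟩
    · rintro ⟨n, hn, rfl⟩
      obtain ⟨d, hd, -⟩ := zeck_exists (A^[0] n - 1)
      exact ⟨d, hd, fun i hi => by omega⟩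
  | succ m ih =>
    constructor
    · rintro ⟨d, hd, hz⟩
      obtain ⟨n', hn', hN⟩ := shift_down hd (hz 0 (by omega))
      have hz' : ∀ i, i < m → (fun i => d (i + 1)) i = 0 := fun i hi => hz (i + 1) (by omega)
      obtain ⟨n, hn1, hn2⟩ := (ih n').mp ⟨_, hn', hz'⟩
      have hAm : 1 ≤ A^[m] n := le_trans hn1 (A_iter_ge m n)
      refine ⟨n, hn1, ?_⟩
      have heq : n' + 1 = A^[m] n := by omega
      rw [Function.iterate_succ_apply', ← heq, ← hN]
      omega
    · rintro ⟨n, hn, rfl⟩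
      have hAm : 1 ≤ A^[m] n := le_trans hn (A_iter_ge m n)
      obtain ⟨e, he, hez⟩ := (ih (A^[m] n - 1)).mpr ⟨n, hn, rfl⟩
      have hsu := shift_up he
      have hAe : A (A^[m] n - 1 + 1) = A^[m + 1] n := by
        rw [Function.iterate_succ_apply']
        congr 1
        omega
      rw [hAe] at hsu
      refine ⟨_, hsu, ?_⟩
      intro i hi
      cases i with
      | zero => simp
      | succ j =>
        rw [if_neg (by omega)]
        simp only [Nat.add_sub_cancel]
        exact hez j (by omega)
end
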